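/- Let $(\lambda_i)_{i \geq 1}$ and $(\mu_i)_{i \geq 1}$ be sequences in $[0,1)$ satisfying the interlacing property $\lambda_i \geq \mu_i \geq \lambda_{i+1}$ for all $i$, with only finitely many nonzero terms. Let $X = \sum_i \mathrm{Bernoulli}(\lambda_i)$ and $Y = \sum_i \mathrm{Bernoulli}(\mu_i)$ be sums of independent Bernoulli random variables. Then for every integer $k \geq 0$, $\mathbb{P}(Y \leq k) \leq (1 - \lambda_1)^{-(k+1)} \, \mathbb{P}(X \leq k)$. -/

import Mathlib

/-- `P(X ≤ k)` for `X` a sum of independent Bernoulli random variables with success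
probabilities `λ₀, λ₁, …, λ_{N-1}` (and `0` afterwards):
`∑_{J ⊆ {0,…,N-1}, |J| ≤ k} ∏_{j ∈ J} λⱼ ∏_{j ∉ J} (1-λⱼ)`. -/
noncomputable def PLE (lam : ℕ → ℝ) (N k : ℕ) : ℝ :=
  ∑ J ∈ (Finset.range N).powerset.filter (fun J => J.card ≤ k),
    (∏ j ∈ J, lam j) * ∏ j ∈ Finset.range N \ J, (1 - lam j)

open Finset

private lemma succ_inj' : Function.Injective (· + 1 : ℕ → ℕ) := add_left_injective 1

private lemma range_succ_eq (N : ℕ) :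
    Finset.range (N + 1) = insert 0 ((Finset.range N).image (· + 1)) := by
  ext x
  cases x with
  | zero => simp
  | succ n => simp [Nat.succ_lt_succ_iff]

private lemma zero_not_mem_image (s : Finset ℕ) : 0 ∉ s.image (· + 1) := by simp

private lemma powerset_image_succ (N : ℕ) :
    ((Finset.range N).image (· + 1)).powerset
      = ((Finset.range N).powerset).image (Finset.image (· + 1)) := by
  ext J
  simp only [mem_powerset, mem_image]
  rw [Finset.subset_image_iff]

private lemma sum_powerset_shift (N : ℕ) (f : Finset ℕ → ℝ) :
    ∑ J ∈ ((Finset.range N).image (· + 1)).powerset, f J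
      = ∑ J ∈ (Finset.range N).powerset, f (J.image (· + 1)) := by
  rw [powerset_image_succ, Finset.sum_image]
  intro x _ y _ h
  exact Finset.image_injective succ_inj' h

private lemma compl1 (N : ℕ) (J : Finset ℕ) :
    insert 0 ((Finset.range N).image (· + 1)) \ J.image (· + 1)
      = insert 0 ((Finset.range N \ J).image (· + 1)) := by
  rw [Finset.image_sdiff _ _ succ_inj', Finset.insert_sdiff_of_notMem _ (zero_not_mem_image J)]

private lemma compl2 (N : ℕ) (J : Finset ℕ) :
    insert 0 ((Finset.range N).image (· + 1)) \ insert 0 (J.image (· + 1))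
      = (Finset.range N \ J).image (· + 1) := by
  rw [Finset.image_sdiff _ _ succ_inj', Finset.insert_sdiff_insert]
  rw [Finset.sdiff_insert, Finset.erase_eq_of_notMem]
  simp [Finset.mem_sdiff]

private lemma PLE_succN (lam : ℕ → ℝ) (N k : ℕ) :
    PLE lam (N + 1) k
      = (1 - lam 0) * PLE (fun i => lam (i + 1)) N k
        + lam 0 * ∑ J ∈ (Finset.range N).powerset.filter (fun J => J.card + 1 ≤ k),
            (∏ j ∈ J, lam (j + 1)) * ∏ j ∈ Finset.range N \ J, (1 - lam (j + 1)) := by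
  unfold PLE
  rw [sum_filter, sum_filter, sum_filter, range_succ_eq N,
    Finset.sum_powerset_insert (zero_not_mem_image _), sum_powerset_shift, sum_powerset_shift]
  rw [Finset.mul_sum, Finset.mul_sum, ← Finset.sum_add_distrib, ← Finset.sum_add_distrib]
  apply Finset.sum_congr rfl
  intro J hJ
  rw [mem_powerset] at hJ
  have h0J : (0 : ℕ) ∉ J.image (· + 1) := zero_not_mem_image J
  have hcard : (J.image (· + 1)).card = J.card := Finset.card_image_of_injective _ succ_inj'
  have hcard2 : (insert 0 (J.image (· + 1))).card = J.card + 1 := by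
    rw [Finset.card_insert_of_notMem h0J, hcard]
  rw [compl1, compl2, hcard2]
  rw [Finset.prod_insert (zero_not_mem_image _), Finset.prod_insert h0J, hcard]
  by_cases h1 : J.card ≤ k <;> by_cases h2 : J.card + 1 ≤ k <;> simp [h1, h2] <;> ring
private lemma PLE_succ_pos (lam : ℕ → ℝ) (N k : ℕ) :
    PLE lam (N + 1) (k + 1)
      = (1 - lam 0) * PLE (fun i => lam (i + 1)) N (k + 1)
        + lam 0 * PLE (fun i => lam (i + 1)) N k := by
  rw [PLE_succN]
  congr 2
  unfold PLE
  apply Finset.sum_congr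
  · apply Finset.filter_congr
    intro J _
    simp [Nat.add_le_add_iff_right]
  · intros; rfl

private lemma PLE_succ_zero (lam : ℕ → ℝ) (N : ℕ) :
    PLE lam (N + 1) 0 = (1 - lam 0) * PLE (fun i => lam (i + 1)) N 0 := by
  rw [PLE_succN]
  have : (Finset.range N).powerset.filter (fun J => J.card + 1 ≤ 0) = ∅ := by
    apply Finset.filter_false_of_mem
    intro J _
    omega
  rw [this]
  simp

private lemma PLE_zero (lam : ℕ → ℝ) (k : ℕ) : PLE lam 0 k = 1 := by
  simp [PLE, Finset.filter_singleton]

private lemma PLE_nonneg {lam : ℕ → ℝ} (h : ∀ i, 0 ≤ lam i ∧ lam i ≤ 1) (N k : ℕ) :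
    0 ≤ PLE lam N k := by
  apply Finset.sum_nonneg
  intro J _
  apply mul_nonneg
  · exact Finset.prod_nonneg fun i _ => (h i).1
  · exact Finset.prod_nonneg fun i _ => by linarith [(h i).2]

private lemma PLE_mono_k {lam : ℕ → ℝ} (h : ∀ i, 0 ≤ lam i ∧ lam i ≤ 1) (N : ℕ)
    {k k' : ℕ} (hk : k ≤ k') : PLE lam N k ≤ PLE lam N k' := by
  apply Finset.sum_le_sum_of_subset_of_nonneg
  · apply Finset.monotone_filter_right
    intro J _ hJ
    exact le_trans hJ hk
  · intro J _ _
    apply mul_nonneg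
    · exact Finset.prod_nonneg fun i _ => (h i).1
    · exact Finset.prod_nonneg fun i _ => by linarith [(h i).2]

private lemma PLE_anti : ∀ (N : ℕ) (a b : ℕ → ℝ), (∀ i, 0 ≤ a i ∧ a i ≤ 1) →
    (∀ i, 0 ≤ b i ∧ b i ≤ 1) → (∀ i, a i ≤ b i) →
    ∀ k, PLE b N k ≤ PLE a N k := by
  intro N
  induction N with
  | zero => intro a b ha hb hab k; rw [PLE_zero, PLE_zero]
  | succ N ih =>
    intro a b ha hb hab k
    have ha' : ∀ i, 0 ≤ a (i + 1) ∧ a (i + 1) ≤ 1 := fun i => ha (i + 1)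
    have hb' : ∀ i, 0 ≤ b (i + 1) ∧ b (i + 1) ≤ 1 := fun i => hb (i + 1)
    have ih' := ih (fun i => a (i + 1)) (fun i => b (i + 1)) (fun i => ha (i + 1)) (fun i => hb (i + 1)) (fun i => hab (i + 1))
    cases k with
    | zero =>
      rw [PLE_succ_zero, PLE_succ_zero]
      have h1 : 0 ≤ PLE (fun i => b (i + 1)) N 0 := PLE_nonneg hb' N 0
      have h2 : PLE (fun i => b (i + 1)) N 0 ≤ PLE (fun i => a (i + 1)) N 0 := ih' 0
      have h3 : 0 ≤ 1 - b 0 := by linarith [(hb 0).2]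
      have h4 : 1 - b 0 ≤ 1 - a 0 := by linarith [hab 0]
      nlinarith
    | succ k =>
      rw [PLE_succ_pos, PLE_succ_pos]
      have q1 := ih' k
      have q2 := ih' (k + 1)
      have q3 : PLE (fun i => a (i + 1)) N k ≤ PLE (fun i => a (i + 1)) N (k + 1) :=
        PLE_mono_k ha' N (Nat.le_succ k)
      have q4 : 0 ≤ PLE (fun i => b (i + 1)) N k := PLE_nonneg hb' N k
      have q5 : 0 ≤ PLE (fun i => a (i + 1)) N k := PLE_nonneg ha' N k
      have h3 : 0 ≤ 1 - b 0 := by linarith [(hb 0).2]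
      have h4 : 1 - b 0 ≤ 1 - a 0 := by linarith [hab 0]
      have h5 : 0 ≤ a 0 := (ha 0).1
      have h6 : a 0 ≤ b 0 := hab 0
      nlinarith

private lemma PLE_pad {lam : ℕ → ℝ} {N : ℕ} (h : lam N = 0) (k : ℕ) :
    PLE lam (N + 1) k = PLE lam N k := by
  unfold PLE
  rw [Finset.sum_filter, Finset.sum_filter, Finset.range_add_one,
    Finset.sum_powerset_insert Finset.notMem_range_self]
  have h2 : ∀ J ∈ (Finset.range N).powerset,
      (if (insert N J).card ≤ k then (∏ j ∈ insert N J, lam j)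
        * ∏ j ∈ insert N (Finset.range N) \ insert N J, (1 - lam j) else 0) = 0 := by
    intro J hJ
    rw [Finset.mem_powerset] at hJ
    have hN : N ∉ J := fun hc => Finset.notMem_range_self (hJ hc)
    rw [Finset.prod_insert hN, h]
    simp
  rw [Finset.sum_congr rfl h2]
  simp only [Finset.sum_const_zero, add_zero]
  apply Finset.sum_congr rfl
  intro J hJ
  rw [Finset.mem_powerset] at hJ
  have hN : N ∉ J := fun hc => Finset.notMem_range_self (hJ hc)
  have : insert N (Finset.range N) \ J = insert N (Finset.range N \ J) :=
    Finset.insert_sdiff_of_notMem _ hN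
  rw [this, Finset.prod_insert (by simp [Finset.mem_sdiff]), h]
  ring_nf

/-- If `(λᵢ)` and `(μᵢ)` are sequences in `[0,1)` with only finitely many nonzero terms
satisfying the interlacing property `λᵢ ≥ μᵢ ≥ λ_{i+1}`, and `X`, `Y` are sums of independent
Bernoullis with parameters `(λᵢ)`, `(μᵢ)` respectively, then
`P(Y ≤ k) ≤ (1-λ₀)^{-(k+1)} P(X ≤ k)` for every `k ≥ 0`. -/
theorem stmt11 (lam mu : ℕ → ℝ) (N k : ℕ)
    (hlam : ∀ i, 0 ≤ lam i ∧ lam i < 1) (hmu : ∀ i, 0 ≤ mu i ∧ mu i < 1)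
    (hinter : ∀ i, mu i ≤ lam i ∧ lam (i + 1) ≤ mu i)
    (hsupp : ∀ i, N ≤ i → lam i = 0 ∧ mu i = 0) :
    PLE mu N k ≤ (1 - lam 0)⁻¹ ^ (k + 1) * PLE lam N k := by
  have hpos : 0 < 1 - lam 0 := by linarith [(hlam 0).2]
  have hinv1 : 1 ≤ (1 - lam 0)⁻¹ := by
    rw [le_inv_comm₀ one_pos hpos]
    simpa using (hlam 0).1
  have hlam1 : ∀ i, 0 ≤ lam i ∧ lam i ≤ 1 := fun i => ⟨(hlam i).1, le_of_lt (hlam i).2⟩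
  have hmu1 : ∀ i, 0 ≤ mu i ∧ mu i ≤ 1 := fun i => ⟨(hmu i).1, le_of_lt (hmu i).2⟩
  have hinvpow : (1 - lam 0)⁻¹ ≤ (1 - lam 0)⁻¹ ^ (k + 1) := by
    calc (1 - lam 0)⁻¹ = (1 - lam 0)⁻¹ ^ 1 := (pow_one _).symm
    _ ≤ (1 - lam 0)⁻¹ ^ (k + 1) := pow_le_pow_right₀ hinv1 (by omega)
  cases N with
  | zero =>
    rw [PLE_zero, PLE_zero, mul_one]
    calc (1 : ℝ) ≤ (1 - lam 0)⁻¹ := hinv1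
    _ ≤ _ := hinvpow
  | succ M =>
    have hlam' : ∀ i, 0 ≤ lam (i + 1) ∧ lam (i + 1) ≤ 1 := fun i => hlam1 (i + 1)
    have h1 : PLE mu (M + 1) k ≤ PLE (fun i => lam (i + 1)) (M + 1) k :=
      PLE_anti (M + 1) (fun i => lam (i + 1)) mu hlam' hmu1 (fun i => (hinter i).2) k
    have h2 : PLE (fun i => lam (i + 1)) (M + 1) k = PLE (fun i => lam (i + 1)) M k :=
      PLE_pad (lam := fun i => lam (i + 1)) ((hsupp (M + 1) le_rfl).1) k
    have h3 : (1 - lam 0) * PLE (fun i => lam (i + 1)) M k ≤ PLE lam (M + 1) k := by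
      cases k with
      | zero => rw [PLE_succ_zero]
      | succ j =>
        rw [PLE_succ_pos]
        have := PLE_nonneg (fun i => hlam' i) M j
        nlinarith [(hlam 0).1]
    have h4 : PLE (fun i => lam (i + 1)) M k ≤ (1 - lam 0)⁻¹ * PLE lam (M + 1) k := by
      rw [← div_eq_inv_mul, le_div_iff₀ hpos]
      linarith
    calc PLE mu (M + 1) k ≤ PLE (fun i => lam (i + 1)) M k := h2 ▸ h1
    _ ≤ (1 - lam 0)⁻¹ * PLE lam (M + 1) k := h4
    _ ≤ (1 - lam 0)⁻¹ ^ (k + 1) * PLE lam (M + 1) k := by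
        apply mul_le_mul_of_nonneg_right hinvpow (PLE_nonneg hlam1 (M + 1) k)
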